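/- arXiv:0910.2393 — 3 statements merged into one kernel-verified Lean document; each statement's English description precedes it below -/
import Mathlib

section
/- Let H be a complex Hilbert space and let φ, ψ be nonzero vectors of H. Then e_H(φ, S) = e_H(ψ, S) for every closed subspace S of H if and only if there exists λ ∈ ℂ with φ = λ • ψ. (The equivalence classes of the state-equivalence relation are exactly the rays of H.) -/
/-- The quantum evaluation `e_H(ψ, S) = ‖P_S ψ‖² / ‖ψ‖²` for a closed subspace `S`
of a complex Hilbert space `H`. -/
noncomputable def qeval {H : Type*} [NormedAddCommGroup H] [InnerProductSpace ℂ H]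
    [CompleteSpace H] (ψ : H) (S : Submodule ℂ H) (hS : IsClosed (S : Set H)) : ℝ :=
  letI : CompleteSpace S := hS.completeSpace_coe
  ‖(S.orthogonalProjection ψ : H)‖ ^ 2 / ‖ψ‖ ^ 2

/-- Two nonzero vectors `φ`, `ψ` of a complex Hilbert space have the same evaluation on every
closed subspace iff they lie on the same ray: `φ = λ • ψ` for some `λ ∈ ℂ`.  (The equivalence
classes of the state-equivalence relation are exactly the rays.) -/
theorem qeval_state_equiv_iff_ray {H : Type*} [NormedAddCommGroup H] [InnerProductSpace ℂ H]
    [CompleteSpace H] (φ ψ : H) (hφ : φ ≠ 0) (hψ : ψ ≠ 0) :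
    (∀ (S : Submodule ℂ H) (hS : IsClosed (S : Set H)), qeval φ S hS = qeval ψ S hS) ↔
      ∃ lam : ℂ, φ = lam • ψ := by
  constructor
  · intro h
    set S : Submodule ℂ H := Submodule.span ℂ {ψ} with hSdef
    have hS : IsClosed (S : Set H) := S.closed_of_finiteDimensional
    haveI : CompleteSpace S := hS.completeSpace_coe
    have hmem : ψ ∈ S := Submodule.mem_span_singleton_self ψ
    have h1 : qeval ψ S hS = 1 := by
      simp [qeval, Submodule.starProjection_eq_self_iff.mpr hmem,
        div_self (pow_ne_zero 2 (norm_ne_zero_iff.mpr hψ))]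
    have h2 : qeval φ S hS = 1 := (h S hS).trans h1
    have hnorm : ‖(S.orthogonalProjection φ : H)‖ ^ 2 = ‖φ‖ ^ 2 := by
      have := h2
      rw [qeval, div_eq_one_iff_eq (pow_ne_zero 2 (norm_ne_zero_iff.mpr hφ))] at this
      exact this
    have hpyth := Submodule.norm_sq_eq_add_norm_sq_projection φ S
    have hperp : ‖(Sᗮ.orthogonalProjection φ : H)‖ ^ 2 = 0 := by
      have hc : ‖(S.orthogonalProjection φ : H)‖ = ‖S.orthogonalProjection φ‖ := rfl
      have hc2 : ‖(Sᗮ.orthogonalProjection φ : H)‖ = ‖Sᗮ.orthogonalProjection φ‖ := rfl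
      rw [← hc, ← hc2] at hpyth
      nlinarith [hpyth, hnorm]
    have hz : Sᗮ.orthogonalProjection φ = 0 := by
      have : ‖(Sᗮ.orthogonalProjection φ : H)‖ = 0 := by nlinarith [norm_nonneg ((Sᗮ.orthogonalProjection φ : H))]
      exact Subtype.ext (norm_eq_zero.mp this)
    have hφS : φ ∈ S := by
      have := Submodule.orthogonalProjectionOnto_eq_zero_iff.mp hz
      rwa [Submodule.orthogonal_orthogonal] at this
    obtain ⟨lam, hl⟩ := Submodule.mem_span_singleton.mp hφS
    exact ⟨lam, hl.symm⟩
  · rintro ⟨lam, rfl⟩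
    have hlam : lam ≠ 0 := by rintro rfl; simp at hφ
    intro S hS
    haveI : CompleteSpace S := hS.completeSpace_coe
    have hmap : (S.orthogonalProjection (lam • ψ) : H) = lam • (S.orthogonalProjection ψ : H) := by
      rw [map_smul]; rfl
    simp only [qeval, hmap, norm_smul]
    rw [mul_pow, mul_pow, mul_div_mul_left]
    exact pow_ne_zero 2 (norm_ne_zero_iff.mpr hlam)
end

section
/- Let H and K be complex Hilbert spaces with H nontrivial (H ≠ {0}), let σ : ℂ →+* ℂ be a surjective ring homomorphism, and let g : H → K be an injective σ-semilinear map (additive, with g(λψ) = σ(λ)·g(ψ)). Suppose there exists a function f^* from closed subspaces of K to closed subspaces of H such that for every nonzero ψ ∈ H and every closed subspace S of K, e_H(ψ, f^*(S)) = e_K(g(ψ), S). Then g is surjective. -/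
local notation "⟪" x ", " y "⟫_ℂ" => @inner ℂ _ _ x y


lemma qeval_eq_one_of_mem {H : Type*} [NormedAddCommGroup H] [InnerProductSpace ℂ H]
    [CompleteSpace H] {ψ : H} (hψ : ψ ≠ 0) {S : Submodule ℂ H}
    (hS : IsClosed (S : Set H)) (hmem : ψ ∈ S) : qeval ψ S hS = 1 := by
  letI : CompleteSpace S := hS.completeSpace_coe
  show ‖(S.orthogonalProjection ψ : H)‖ ^ 2 / ‖ψ‖ ^ 2 = 1
  rw [show (S.orthogonalProjection ψ : H) = ψ from S.starProjection_eq_self_iff.mpr hmem]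
  have : ‖ψ‖ ≠ 0 := norm_ne_zero_iff.mpr hψ
  field_simp

lemma mem_of_qeval_eq_one {H : Type*} [NormedAddCommGroup H] [InnerProductSpace ℂ H]
    [CompleteSpace H] {ψ : H} (hψ : ψ ≠ 0) {S : Submodule ℂ H}
    (hS : IsClosed (S : Set H)) (h : qeval ψ S hS = 1) : ψ ∈ S := by
  letI : CompleteSpace S := hS.completeSpace_coe
  have hn : ‖ψ‖ ^ 2 ≠ 0 := pow_ne_zero _ (norm_ne_zero_iff.mpr hψ)
  have h' : ‖(S.orthogonalProjection ψ : H)‖ ^ 2 = ‖ψ‖ ^ 2 := by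
    have h0 : ‖(S.orthogonalProjection ψ : H)‖ ^ 2 / ‖ψ‖ ^ 2 = 1 := h
    rwa [div_eq_one_iff_eq hn] at h0
  have hperp : ⟪(S.orthogonalProjection ψ : H), ψ - S.orthogonalProjection ψ⟫_ℂ = 0 := by
    rw [inner_eq_zero_symm]
    exact Submodule.starProjection_inner_eq_zero ψ _ (SetLike.coe_mem _)
  have hsum := norm_add_sq_eq_norm_sq_add_norm_sq_of_inner_eq_zero
    ((S.orthogonalProjection ψ : H)) (ψ - S.orthogonalProjection ψ) hperp
  rw [add_sub_cancel] at hsum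
  have : ‖ψ - (S.orthogonalProjection ψ : H)‖ ^ 2 = 0 := by
    nlinarith [hsum, h']
  have hz : ψ - (S.orthogonalProjection ψ : H) = 0 := by
    have := pow_eq_zero_iff (n := 2) (by norm_num) |>.mp this
    exact norm_eq_zero.mp this
  have : ψ = (S.orthogonalProjection ψ : H) := by
    rwa [sub_eq_zero] at hz
  rw [this]
  exact SetLike.coe_mem _

lemma qeval_eq_zero_iff {H : Type*} [NormedAddCommGroup H] [InnerProductSpace ℂ H]
    [CompleteSpace H] {ψ : H} (hψ : ψ ≠ 0) {S : Submodule ℂ H}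
    (hS : IsClosed (S : Set H)) : qeval ψ S hS = 0 ↔ ψ ∈ Sᗮ := by
  letI : CompleteSpace S := hS.completeSpace_coe
  have hn : ‖ψ‖ ^ 2 ≠ 0 := pow_ne_zero _ (norm_ne_zero_iff.mpr hψ)
  show ‖(S.orthogonalProjection ψ : H)‖ ^ 2 / ‖ψ‖ ^ 2 = 0 ↔ ψ ∈ Sᗮ
  rw [div_eq_zero_iff]
  simp only [hn, or_false]
  rw [pow_eq_zero_iff (two_ne_zero), norm_eq_zero, ← Submodule.coe_zero (p := S),
    Subtype.coe_inj]
  exact Submodule.orthogonalProjectionOnto_eq_zero_iff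

/-- Let `H ≠ {0}` and `K` be complex Hilbert spaces, `σ : ℂ →+* ℂ` a surjective ring
homomorphism, and `g : H → K` an injective `σ`-semilinear map.  If there is a map `f₂` from
closed subspaces of `K` to closed subspaces of `H` making `(P g, f₂)` a Chu morphism, i.e.
`e_H(ψ, f₂ S) = e_K(g ψ, S)` for all nonzero `ψ` and closed `S`, then `g` is surjective. -/
theorem chu_semilinear_surjective
    {H K : Type*} [NormedAddCommGroup H] [InnerProductSpace ℂ H] [CompleteSpace H]
    [NormedAddCommGroup K] [InnerProductSpace ℂ K] [CompleteSpace K]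
    [Nontrivial H]
    (σ : ℂ →+* ℂ) (hσ : Function.Surjective σ)
    (g : H → K) (hginj : Function.Injective g)
    (hadd : ∀ x y : H, g (x + y) = g x + g y)
    (hsmul : ∀ (lam : ℂ) (x : H), g (lam • x) = σ lam • g x)
    (f₂ : {S : Submodule ℂ K // IsClosed (S : Set K)} →
          {S : Submodule ℂ H // IsClosed (S : Set H)})
    (hchu : ∀ (ψ : H) (hψ : ψ ≠ 0) (S : {S : Submodule ℂ K // IsClosed (S : Set K)}),
      qeval ψ (f₂ S).1 (f₂ S).2 = qeval (g ψ) S.1 S.2) :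
    Function.Surjective g := by
  have hg0 : g 0 = 0 := by
    have h := hadd 0 0
    rw [add_zero] at h
    exact (left_eq_add.mp h)
  have hgne : ∀ χ : H, χ ≠ 0 → g χ ≠ 0 := by
    intro χ hχ h
    exact hχ (hginj (h.trans hg0.symm))
  have key : ∀ v : K, (∀ x, g x ≠ v) → ∀ ψ : H, ψ ≠ 0 → ⟪v, g ψ⟫_ℂ = 0 := by
    intro v hv ψ hψ
    have hScl : IsClosed ((ℂ ∙ v : Submodule ℂ K) : Set K) :=
      Submodule.closed_of_finiteDimensional _
    set Sp : {S : Submodule ℂ K // IsClosed (S : Set K)} := ⟨ℂ ∙ v, hScl⟩ with hSp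
    have hbot : ∀ χ : H, χ ∈ (f₂ Sp).1 → χ = 0 := by
      intro χ hχ
      by_contra hχ0
      have h1 := qeval_eq_one_of_mem hχ0 (f₂ Sp).2 hχ
      rw [hchu χ hχ0 Sp] at h1
      have hmem : g χ ∈ (ℂ ∙ v : Submodule ℂ K) :=
        mem_of_qeval_eq_one (hgne χ hχ0) hScl h1
      obtain ⟨c, hc⟩ := Submodule.mem_span_singleton.mp hmem
      have hc0 : c ≠ 0 := by
        rintro rfl
        rw [zero_smul] at hc
        exact hgne χ hχ0 hc.symm
      obtain ⟨μ, hμ⟩ := hσ c⁻¹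
      apply hv (μ • χ)
      rw [hsmul, hμ, ← hc, smul_smul, inv_mul_cancel₀ hc0, one_smul]
    have h0 : qeval ψ (f₂ Sp).1 (f₂ Sp).2 = 0 := by
      rw [qeval_eq_zero_iff hψ]
      intro φ hφ
      rw [hbot φ hφ, inner_zero_left]
    rw [hchu ψ hψ Sp] at h0
    have hmem := (qeval_eq_zero_iff (hgne ψ hψ) hScl).mp h0
    exact hmem v (Submodule.mem_span_singleton_self v)
  by_contra hns
  rw [Function.Surjective] at hns
  push_neg at hns
  obtain ⟨v, hv⟩ := hns
  obtain ⟨ψ₀, hψ₀⟩ := exists_ne (0 : H)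
  have hgsub : ∀ x y : H, g (x - y) = g x - g y := by
    intro x y
    have hneg : g (-y) = -g y := by
      rw [← neg_one_smul ℂ y, hsmul, map_neg, map_one, neg_one_smul]
    rw [sub_eq_add_neg, hadd, hneg, sub_eq_add_neg]
  have hu : ∀ x, g x ≠ v + g ψ₀ := by
    intro x hx
    apply hv (x - ψ₀)
    rw [hgsub, hx, add_sub_cancel_right]
  have h1 := key (v + g ψ₀) hu ψ₀ hψ₀
  have h2 := key v hv ψ₀ hψ₀
  rw [inner_add_left, h2, zero_add] at h1
  exact hgne ψ₀ hψ₀ (inner_self_eq_zero.mp h1)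
end

section
/- Let H and K be complex Hilbert spaces, let U : H → K be semiunitary (unitary or antiunitary), and let h be any function from the nonzero vectors of H to the nonzero vectors of K. Then the following are equivalent: (i) for every nonzero ψ ∈ H and every closed subspace S of K, e_K(h(ψ), S) = e_K(U ψ, S); (ii) there exists a function c from the nonzero vectors of H to ℂ \ {0} such that h(ψ) = c(ψ) • U ψ for all nonzero ψ. (The ∼-equivalence class of U among point maps consists exactly of the pointwise nonzero-scalar multiples of U.) -/
open scoped ComplexInnerProductSpace

lemma qeval_key {K : Type*} [NormedAddCommGroup K] [InnerProductSpace ℂ K] [CompleteSpace K]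
    (χ φ : K) (hχ : χ ≠ 0) (hφ : φ ≠ 0) :
    (∀ (S : Submodule ℂ K) (hS : IsClosed (S : Set K)), qeval χ S hS = qeval φ S hS) ↔
      ∃ c : ℂ, c ≠ 0 ∧ χ = c • φ := by
  constructor
  · intro hall
    set S : Submodule ℂ K := ℂ ∙ φ with hSdef
    have hS : IsClosed (S : Set K) := S.closed_of_finiteDimensional
    haveI : CompleteSpace S := hS.completeSpace_coe
    have hφS : φ ∈ S := Submodule.mem_span_singleton_self φ
    have hPφ : (S.orthogonalProjection φ : K) = φ := Submodule.starProjection_eq_self_iff.mpr hφS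
    have h1 : qeval φ S hS = 1 := by
      simp [qeval, hPφ, div_self, pow_ne_zero, norm_ne_zero_iff.mpr hφ]
    have h2 : ‖(S.orthogonalProjection χ : K)‖ = ‖χ‖ := by
      have := hall S hS
      rw [h1] at this
      have hχ2 : ‖χ‖ ^ 2 ≠ 0 := pow_ne_zero _ (norm_ne_zero_iff.mpr hχ)
      unfold qeval at this
      field_simp at this
      exact (mul_self_inj (norm_nonneg _) (norm_nonneg _)).mp (by simpa [pow_two] using this)
    have hpyth : ‖χ‖ ^ 2 = ‖(S.orthogonalProjection χ : K)‖ ^ 2 + ‖χ - (S.orthogonalProjection χ : K)‖ ^ 2 := by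
      have hinner : (inner ℂ ((S.orthogonalProjection χ : K)) (χ - (S.orthogonalProjection χ : K)) : ℂ) = 0 :=
        Submodule.inner_right_of_mem_orthogonal (S.orthogonalProjection χ).2
          (Submodule.sub_starProjection_mem_orthogonal χ)
      have := norm_add_sq_eq_norm_sq_add_norm_sq_of_inner_eq_zero _ _ hinner
      simpa [pow_two] using this
    have hz : χ - (S.orthogonalProjection χ : K) = 0 := by
      have h0 : ‖χ - (S.orthogonalProjection χ : K)‖ ^ 2 = 0 := by rw [h2] at hpyth; linarith
      simpa using h0
    have hmem : χ ∈ S := by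
      rw [sub_eq_zero] at hz
      rw [hz]; exact (S.orthogonalProjection χ).2
    obtain ⟨c, hc⟩ := Submodule.mem_span_singleton.mp hmem
    refine ⟨c, ?_, hc.symm⟩
    rintro rfl
    rw [zero_smul] at hc
    exact hχ hc.symm
  · rintro ⟨c, hc, rfl⟩ S hS
    haveI : CompleteSpace S := hS.completeSpace_coe
    have : (S.orthogonalProjection (c • φ) : K) = c • (S.orthogonalProjection φ : K) := by
      simp [map_smul]
    simp only [qeval, this, norm_smul]
    rw [mul_pow, mul_pow, mul_div_mul_left]
    exact pow_ne_zero _ (norm_ne_zero_iff.mpr hc)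

/-- Let `U : H → K` be semiunitary (unitary or antiunitary) and let `h` be a function from
nonzero vectors of `H` to nonzero vectors of `K`.  Then `h` is state-equivalent to `U`
(i.e. `e_K(h ψ, S) = e_K(U ψ, S)` for all nonzero `ψ` and closed `S`) iff `h` is a pointwise
nonzero-scalar multiple of `U`. -/
theorem semiunitary_equiv_class
    {H K : Type*} [NormedAddCommGroup H] [InnerProductSpace ℂ H] [CompleteSpace H]
    [NormedAddCommGroup K] [InnerProductSpace ℂ K] [CompleteSpace K]
    (U : H → K)
    (hU : (∃ U' : H ≃ₗᵢ[ℂ] K, ∀ x : H, U x = U' x) ∨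
          (∃ U' : H ≃ₛₗᵢ[starRingEnd ℂ] K, ∀ x : H, U x = U' x))
    (h : {ψ : H // ψ ≠ 0} → {χ : K // χ ≠ 0}) :
    (∀ (ψ : {ψ : H // ψ ≠ 0}) (S : Submodule ℂ K) (hS : IsClosed (S : Set K)),
        qeval (h ψ : K) S hS = qeval (U ψ) S hS) ↔
      ∃ c : {ψ : H // ψ ≠ 0} → ℂ, (∀ ψ, c ψ ≠ 0) ∧
        ∀ ψ : {ψ : H // ψ ≠ 0}, (h ψ : K) = c ψ • U ψ := by
  have hUnz : ∀ ψ : {ψ : H // ψ ≠ 0}, U (ψ : H) ≠ 0 := by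
    intro ψ
    rcases hU with ⟨U', hU'⟩ | ⟨U', hU'⟩ <;> rw [hU'] <;>
      simp [LinearIsometryEquiv.map_eq_zero_iff, ψ.2]
  constructor
  · intro hall
    choose c hc hceq using fun ψ =>
      (qeval_key (h ψ : K) (U ψ) (h ψ).2 (hUnz ψ)).mp (hall ψ)
    exact ⟨c, hc, hceq⟩
  · rintro ⟨c, hc, hceq⟩ ψ S hS
    exact (qeval_key _ _ (h ψ).2 (hUnz ψ)).mpr ⟨c ψ, hc ψ, hceq ψ⟩ S hS
end
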